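/- For the kernel Γ(x) = P_c(|x|) e^{-|x|} on ℝ^d associated with the norm ‖v‖_V² = ∫ |(Id − a²Δ)^{m/2} v|² dx with c = m − (d+1)/2 a positive integer and P_c the normalized reverse Bessel polynomial of degree c, Γ is C^c at x = 0 and C^∞ on ℝ^d \ {0}, Γ(0) = 1, and Γ(x) → 0 as |x| → ∞. -/

import Mathlib

open Polynomial

/-- The reverse Bessel polynomials `θ₀ = 1`, `θ₁ = X + 1`,
`θ_{n+2} = (2n+3) θ_{n+1} + X² θ_n`. -/
noncomputable def revBessel : ℕ → Polynomial ℝ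
  | 0 => 1
  | 1 => X + 1
  | (n + 2) => C (2 * (n : ℝ) + 3) * revBessel (n + 1) + X ^ 2 * revBessel n

lemma revBessel_deriv : ∀ n : ℕ,
    derivative (revBessel (n + 1)) = revBessel (n + 1) - X * revBessel n := by
  intro n
  induction n using Nat.twoStepInduction with
  | zero => simp [revBessel]
  | one =>
      show derivative (revBessel (0 + 2)) = revBessel (0 + 2) - X * revBessel 1
      simp [revBessel, map_ofNat]; ring
  | more n ih1 ih2 =>
      show derivative (revBessel ((n + 1) + 2)) = revBessel ((n + 1) + 2) - X * revBessel (n + 2)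
      have hrec2 : revBessel (n + 2) = C (2 * (n : ℝ) + 3) * revBessel (n + 1)
          + X ^ 2 * revBessel n := rfl
      have hrec3 : revBessel ((n + 1) + 2) = C (2 * ((n : ℝ) + 1) + 3) * revBessel (n + 2)
          + X ^ 2 * revBessel (n + 1) := by
        show revBessel (n + 3) = _
        have : revBessel (n + 3) = C (2 * ((n + 1 : ℕ) : ℝ) + 3) * revBessel (n + 2)
            + X ^ 2 * revBessel (n + 1) := rfl
        rw [this]; push_cast; ring_nf
      rw [hrec3, derivative_add, derivative_mul, derivative_C, derivative_mul,
        derivative_X_pow, ih2, hrec2]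
      have ihn : derivative (revBessel (n + 1)) = revBessel (n + 1) - X * revBessel n := ih1
      rw [ihn]
      push_cast
      simp only [map_add, map_mul, map_ofNat, map_one]
      ring

lemma revBessel_eval_zero_pos : ∀ n : ℕ, 0 < (revBessel n).eval 0 := by
  intro n
  induction n using Nat.twoStepInduction with
  | zero => simp [revBessel]
  | one => simp [revBessel]
  | more n ih1 ih2 =>
      have : revBessel (n + 2) = C (2 * (n : ℝ) + 3) * revBessel (n + 1)
          + X ^ 2 * revBessel n := rfl
      rw [this]
      simp only [eval_add, eval_mul, eval_C, eval_pow, eval_X]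
      nlinarith [ih2]

/-- The one-dimensional profile. -/
noncomputable def rbG (n : ℕ) (t : ℝ) : ℝ := (revBessel n).eval t * Real.exp (-t)

lemma contDiff_poly_eval (p : Polynomial ℝ) {n : WithTop ℕ∞} :
    ContDiff ℝ n fun t : ℝ => p.eval t := by
  induction p using Polynomial.induction_on' with
  | add p q hp hq => simpa using hp.add hq
  | monomial k a => simpa [Polynomial.eval_monomial] using
      (contDiff_const (c := a)).mul ((contDiff_id (𝕜 := ℝ)).pow k)

lemma contDiff_rbG (n : ℕ) {m : WithTop ℕ∞} : ContDiff ℝ m (rbG n) :=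
  (contDiff_poly_eval _).mul (Real.contDiff_exp.comp contDiff_neg)

lemma hasDerivAt_rbG (n : ℕ) (t : ℝ) :
    HasDerivAt (rbG (n + 1)) (-(t * (revBessel n).eval t * Real.exp (-t))) t := by
  have hexp : HasDerivAt (fun s : ℝ => Real.exp (-s)) (-Real.exp (-t)) t := by
    have h := (Real.hasDerivAt_exp (-t)).comp t (hasDerivAt_neg t)
    simp only [mul_neg, mul_one] at h; exact h
  have hp : HasDerivAt (fun s : ℝ => (revBessel (n + 1)).eval s)
      ((derivative (revBessel (n + 1))).eval t) t := Polynomial.hasDerivAt _ t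
  have h := hp.mul hexp
  have hd : (derivative (revBessel (n + 1))).eval t
      = (revBessel (n + 1)).eval t - t * (revBessel n).eval t := by
    rw [revBessel_deriv]; simp
  rw [hd] at h
  refine h.congr_deriv ?_
  ring

section Kernel

variable {E : Type*} [NormedAddCommGroup E] [InnerProductSpace ℝ E]

/-- The radial kernel. -/
noncomputable def rbK (n : ℕ) (x : E) : ℝ := rbG n ‖x‖

lemma hasFDerivAt_rbK (n : ℕ) (x : E) :
    HasFDerivAt (rbK (n + 1) : E → ℝ) ((-(rbK n x)) • (innerSL ℝ x : E →L[ℝ] ℝ)) x := by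
  rcases eq_or_ne x 0 with rfl | hx
  · have h0 : ((-(rbK n (0 : E))) • (innerSL ℝ (0 : E) : E →L[ℝ] ℝ)) = 0 := by
      ext v; simp [innerSL_apply_apply]
    rw [h0]
    rw [hasFDerivAt_iff_isLittleO_nhds_zero]
    have hg : HasDerivAt (rbG (n + 1)) 0 0 := by
      simpa using hasDerivAt_rbG n 0
    have h1 : (fun t : ℝ => rbG (n + 1) t - rbG (n + 1) 0) =o[nhds 0] fun t : ℝ => t := by
      have := hg.isLittleO
      simpa using this
    have h2 : (fun h : E => rbG (n + 1) ‖h‖ - rbG (n + 1) 0) =o[nhds 0] fun h : E => ‖h‖ :=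
      h1.comp_tendsto tendsto_norm_zero
    have h3 : (fun h : E => (‖h‖ : ℝ)) =O[nhds 0] fun h : E => h :=
      Asymptotics.isBigO_norm_left.mpr (Asymptotics.isBigO_refl _ _)
    have h4 := h2.trans_isBigO h3
    simpa [rbK] using h4
  · have hn : ‖x‖ ≠ 0 := norm_ne_zero_iff.mpr hx
    have hip : (inner ℝ x x : ℝ) ≠ 0 := by
      rw [real_inner_self_eq_norm_sq]; positivity
    have h1 : HasFDerivAt (fun y : E => (inner ℝ y y : ℝ))
        ((fderivInnerCLM ℝ (x, x)).comp
          ((ContinuousLinearMap.id ℝ E).prod (ContinuousLinearMap.id ℝ E))) x :=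
      (hasFDerivAt_id x).inner ℝ (hasFDerivAt_id x)
    have h2 := (Real.hasDerivAt_sqrt hip).comp_hasFDerivAt_of_eq x h1 rfl
    have hnormfun : (Real.sqrt ∘ fun y : E => (inner ℝ y y : ℝ)) = fun y : E => ‖y‖ := by
      funext y; simp [Function.comp, real_inner_self_eq_norm_sq, Real.sqrt_sq, norm_nonneg]
    rw [hnormfun] at h2
    have h3 := (hasDerivAt_rbG n ‖x‖).comp_hasFDerivAt x h2
    have hfun : (rbG (n + 1) ∘ fun y : E => ‖y‖) = (rbK (n + 1) : E → ℝ) := rfl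
    rw [hfun] at h3
    refine h3.congr_fderiv ?_
    ext v
    have hsq : Real.sqrt (inner ℝ x x : ℝ) = ‖x‖ := by
      rw [real_inner_self_eq_norm_sq, Real.sqrt_sq (norm_nonneg x)]
    simp only [ContinuousLinearMap.smul_apply, innerSL_apply_apply, smul_eq_mul,
      ContinuousLinearMap.coe_comp', Function.comp_apply, ContinuousLinearMap.prod_apply,
      ContinuousLinearMap.coe_id', id_eq, fderivInnerCLM_apply, hsq]
    rw [real_inner_comm v x]
    rw [rbK, rbG]
    field_simp
    ring

lemma contDiff_rbK : ∀ n : ℕ, ContDiff ℝ (n : WithTop ℕ∞) (rbK n : E → ℝ) := by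
  intro n
  induction n with
  | zero =>
      rw [show ((0 : ℕ) : WithTop ℕ∞) = 0 by rfl, contDiff_zero]
      exact (contDiff_rbG 0 (m := 0)).continuous.comp continuous_norm
  | succ n ih =>
      rw [show (((n + 1 : ℕ)) : WithTop ℕ∞) = (n : WithTop ℕ∞) + 1 by push_cast; rfl]
      rw [contDiff_succ_iff_fderiv]
      refine ⟨fun x => (hasFDerivAt_rbK n x).differentiableAt, by simp, ?_⟩
      have hfd : (fderiv ℝ (rbK (n + 1) : E → ℝ))
          = fun x => (-(rbK n x)) • (innerSL ℝ x : E →L[ℝ] ℝ) := by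
        funext x; exact (hasFDerivAt_rbK n x).fderiv
      rw [hfd]
      exact ih.neg.smul (innerSL ℝ : E →L[ℝ] E →L[ℝ] ℝ).contDiff

end Kernel

/-- for `Γ(x) = P_c(|x|)e^{-|x|}` with `P_c` the reverse Bessel polynomial
of degree `c` normalized so that `P_c(0) = 1`, and `c = m − (d+1)/2` a positive integer
(the kernel of the Sobolev norm of order `m` on `ℝ^d`), the function `Γ` is `C^c` at
`x = 0`, `C^∞` away from `0`, satisfies `Γ(0) = 1`, and tends to `0` at infinity. -/
theorem stmt_16 (d m c : ℕ) (hc : 0 < c)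
    (hrel : (c : ℝ) = (m : ℝ) - ((d : ℝ) + 1) / 2)
    (Γ : EuclideanSpace ℝ (Fin d) → ℝ)
    (hΓ : ∀ x, Γ x = ((revBessel c).eval 0)⁻¹ * (revBessel c).eval ‖x‖ * Real.exp (-‖x‖)) :
    ContDiffAt ℝ c Γ 0 ∧
    (∀ x ≠ 0, ContDiffAt ℝ (⊤ : ℕ∞) Γ x) ∧
    Γ 0 = 1 ∧
    Filter.Tendsto Γ (Filter.cocompact _) (nhds 0) := by
  have h0pos := revBessel_eval_zero_pos c
  have hΓeq : Γ = fun x => ((revBessel c).eval 0)⁻¹ * rbK c x := by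
    funext x; rw [hΓ x, rbK, rbG]; ring
  refine ⟨?_, ?_, ?_, ?_⟩
  · -- C^c at 0
    rw [hΓeq]
    exact (contDiff_const.mul (contDiff_rbK c)).contDiffAt
  · -- C^∞ away from 0
    intro x hx
    rw [hΓeq]
    have h1 : ContDiffAt ℝ ((⊤ : ℕ∞) : WithTop ℕ∞)
        (fun y : EuclideanSpace ℝ (Fin d) => rbG c ‖y‖) x :=
      (contDiff_rbG c).contDiffAt.comp x (contDiffAt_norm ℝ hx)
    exact contDiffAt_const.mul h1
  · -- value at 0
    rw [hΓ 0]
    simp [inv_mul_cancel₀ h0pos.ne']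
  · -- decay at infinity
    rw [hΓeq]
    have h1 : Filter.Tendsto (fun t : ℝ => rbG c t) Filter.atTop (nhds 0) := by
      have := (revBessel c).tendsto_div_exp_atTop
      refine this.congr (fun t => ?_)
      rw [rbG, Real.exp_neg, div_eq_mul_inv]
    have h2 : Filter.Tendsto (fun x : EuclideanSpace ℝ (Fin d) => rbK c x)
        (Filter.cocompact _) (nhds 0) :=
      h1.comp tendsto_norm_cocompact_atTop
    simpa using h2.const_mul ((revBessel c).eval 0)⁻¹
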